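/- Let d ≥ 1, let f : ℝ^d → ℝ^d be a C^1 diffeomorphism, and let K ⊆ ℝ^d be a compact set with f(K) = K whose Lebesgue measure is m(K) = 1. Then Lebesgue-almost every x ∈ K has the following property: every asymptotic measure μ of x (i.e., every weak-star limit point μ of the sequence of empirical measures μ_k(x)) satisfies ∫ log|det Df| dμ ≤ 0. -/

import Mathlib

open MeasureTheory Filter Topology

/-- The Birkhoff average `(1/k) ∑_{l=0}^{k-1} g(f^l(x))`, i.e. the integral of the
observable `g` against the `k`-th empirical measure `μ_k(x) = (1/k) ∑_{l<k} δ_{f^l(x)}`. -/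
noncomputable def birkhoffAvg {X : Type*} (f : X → X) (g : X → ℝ) (x : X) (k : ℕ) : ℝ :=
  (∑ l ∈ Finset.range k, g (f^[l] x)) / k

section Aux

variable {d : ℕ} {f : EuclideanSpace ℝ (Fin d) → EuclideanSpace ℝ (Fin d)}

lemma aux_iterate_image {K : Set (EuclideanSpace ℝ (Fin d))} (hfK : f '' K = K) (n : ℕ) :
    f^[n] '' K = K := by
  induction n with
  | zero => simp
  | succ n ih => rw [Function.iterate_succ', Set.image_comp, ih, hfK]

lemma aux_clm_det_comp (A B : EuclideanSpace ℝ (Fin d) →L[ℝ] EuclideanSpace ℝ (Fin d)) :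
    (A.comp B).det = A.det * B.det := by
  simp only [ContinuousLinearMap.det, ContinuousLinearMap.coe_comp, LinearMap.det_comp]
  exact LinearMap.det_comp _ _

lemma aux_det_iterate (hf : ContDiff ℝ 1 f) (n : ℕ) (x : EuclideanSpace ℝ (Fin d)) :
    (fderiv ℝ (f^[n]) x).det =
      ∏ l ∈ Finset.range n, (fderiv ℝ f (f^[l] x)).det := by
  induction n with
  | zero =>
    simp [ContinuousLinearMap.det, fderiv_id']
  | succ n ih =>
    rw [Function.iterate_succ',
      fderiv_comp x ((hf.differentiable one_ne_zero) _)
        (((hf.differentiable one_ne_zero).iterate n) x),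
      aux_clm_det_comp, ih, Finset.prod_range_succ, mul_comm]

lemma aux_det_ne_zero {g : EuclideanSpace ℝ (Fin d) → EuclideanSpace ℝ (Fin d)}
    (hf : ContDiff ℝ 1 f) (hg : ContDiff ℝ 1 g)
    (hgf : Function.LeftInverse g f) (x : EuclideanSpace ℝ (Fin d)) :
    (fderiv ℝ f x).det ≠ 0 := by
  have h1 : g ∘ f = id := hgf.comp_eq_id
  have h2 : fderiv ℝ (g ∘ f) x = (fderiv ℝ g (f x)).comp (fderiv ℝ f x) :=
    fderiv_comp x ((hg.differentiable one_ne_zero) _) ((hf.differentiable one_ne_zero) x)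
  rw [h1, fderiv_id] at h2
  have h3 : (fderiv ℝ g (f x)).det * (fderiv ℝ f x).det = 1 := by
    rw [← aux_clm_det_comp, ← h2]
    simp [ContinuousLinearMap.det]
  intro h
  rw [h, mul_zero] at h3
  exact zero_ne_one h3

end Aux

/-- Let `f` be a `C¹` diffeomorphism of `ℝ^d` with a compact invariant set `K` of Lebesgue
measure `1`. Then almost every `x ∈ K` satisfies: every asymptotic measure `μ` of `x`
(every probability measure on `K` which is a weak-star limit point of the sequence of
empirical measures `μ_k(x)`, i.e. a weak-star limit of `μ_{k_i}(x)` along some strictly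
increasing subsequence) satisfies `∫ log |det Df| dμ ≤ 0`. -/
theorem ae_asymptotic_measure_log_det_nonpos (d : ℕ) (hd : 1 ≤ d)
    (f g : EuclideanSpace ℝ (Fin d) → EuclideanSpace ℝ (Fin d))
    (hf : ContDiff ℝ 1 f) (hg : ContDiff ℝ 1 g)
    (hgf : Function.LeftInverse g f) (hfg : Function.RightInverse g f)
    (K : Set (EuclideanSpace ℝ (Fin d))) (hK : IsCompact K) (hfK : f '' K = K)
    (hvolK : volume K = 1) :
    ∀ᵐ x ∂(volume.restrict K),
      ∀ μ : Measure (EuclideanSpace ℝ (Fin d)), IsProbabilityMeasure μ → μ Kᶜ = 0 →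
        (∃ φ : ℕ → ℕ, StrictMono φ ∧
          ∀ h : EuclideanSpace ℝ (Fin d) → ℝ, Continuous h →
            Tendsto (fun i => birkhoffAvg f h x (φ i)) atTop (𝓝 (∫ y, h y ∂μ))) →
        (∫ y, Real.log |(fderiv ℝ f y).det| ∂μ) ≤ 0 := by
  set h : EuclideanSpace ℝ (Fin d) → ℝ := fun y => Real.log |(fderiv ℝ f y).det| with hh
  have hdetpos : ∀ y, 0 < |(fderiv ℝ f y).det| :=
    fun y => abs_pos.mpr (aux_det_ne_zero hf hg hgf y)
  have hcontabs : Continuous fun y => |(fderiv ℝ f y).det| :=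
    (ContinuousLinearMap.continuous_det.comp (hf.continuous_fderiv one_ne_zero)).abs
  have hcont : Continuous h := by
    rw [continuous_iff_continuousAt]
    intro y
    exact ContinuousAt.comp (g := Real.log)
      (Real.continuousAt_log (hdetpos y).ne') hcontabs.continuousAt
  -- change of variables: the total mass of |det Df^[n]| on K is 1
  have key : ∀ n : ℕ,
      ∫⁻ x in K, ENNReal.ofReal |(fderiv ℝ (f^[n]) x).det| ∂volume = 1 := by
    intro n
    rw [lintegral_abs_det_fderiv_eq_addHaar_image volume hK.measurableSet
        (fun x _ => (((hf.differentiable one_ne_zero).iterate n) x).hasFDerivAt.hasFDerivWithinAt)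
        ((hgf.injective.iterate n).injOn),
      aux_iterate_image hfK n, hvolK]
  -- product formula for the absolute jacobian of the iterates
  have hprod : ∀ n x, |(fderiv ℝ (f^[n]) x).det|
      = Real.exp (∑ l ∈ Finset.range n, h (f^[l] x)) := by
    intro n x
    rw [aux_det_iterate hf n x, Finset.abs_prod, Real.exp_sum]
    exact Finset.prod_congr rfl fun l _ => (Real.exp_log (hdetpos _)).symm
  have hcontdet : ∀ n : ℕ, Continuous fun x => |(fderiv ℝ (f^[n]) x).det| := by
    intro n
    have : (fun x => |(fderiv ℝ (f^[n]) x).det|)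
        = fun x => Real.exp (∑ l ∈ Finset.range n, h (f^[l] x)) := funext (hprod n)
    rw [this]
    exact Real.continuous_exp.comp (continuous_finset_sum _ fun l _ =>
      hcont.comp ((hf.continuous).iterate l))
  -- main a.e. estimate via Markov + Borel–Cantelli
  have main : ∀ᵐ x ∂(volume.restrict K), ∀ m : ℕ,
      ∀ᶠ n in atTop, birkhoffAvg f h x n ≤ 1 / ((m : ℝ) + 1) := by
    rw [ae_all_iff]
    intro m
    set ε : ℝ := 1 / ((m : ℝ) + 1) with hε'
    have hε : 0 < ε := by positivity
    set S : ℕ → Set (EuclideanSpace ℝ (Fin d)) :=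
      fun n => {x | (n : ℝ) * ε ≤ ∑ l ∈ Finset.range n, h (f^[l] x)} with hS
    set r : ENNReal := ENNReal.ofReal (Real.exp (-ε)) with hr'
    have hbound : ∀ n : ℕ, (volume.restrict K) (S n) ≤ r ^ n := by
      intro n
      have hsub : S n ⊆ {x | ENNReal.ofReal (Real.exp ((n : ℝ) * ε))
          ≤ ENNReal.ofReal |(fderiv ℝ (f^[n]) x).det|} := by
        intro x hx
        simp only [Set.mem_setOf_eq] at hx ⊢
        exact ENNReal.ofReal_le_ofReal (by rw [hprod n x]; exact Real.exp_le_exp.mpr hx)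
      have hmeas : Measurable fun x => ENNReal.ofReal |(fderiv ℝ (f^[n]) x).det| :=
        ENNReal.measurable_ofReal.comp (hcontdet n).measurable
      have hmarkov := mul_meas_ge_le_lintegral₀ (μ := volume.restrict K)
        hmeas.aemeasurable (ENNReal.ofReal (Real.exp ((n : ℝ) * ε)))
      rw [key n] at hmarkov
      have hc0 : ENNReal.ofReal (Real.exp ((n : ℝ) * ε)) ≠ 0 := by
        simp [ENNReal.ofReal_eq_zero, not_le, Real.exp_pos]
      have h1 : (volume.restrict K) (S n)
          ≤ 1 / ENNReal.ofReal (Real.exp ((n : ℝ) * ε)) := by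
        rw [ENNReal.le_div_iff_mul_le (Or.inl hc0) (Or.inl ENNReal.ofReal_ne_top)]
        calc (volume.restrict K) (S n) * ENNReal.ofReal (Real.exp ((n : ℝ) * ε))
            ≤ (volume.restrict K) {x | ENNReal.ofReal (Real.exp ((n : ℝ) * ε))
                ≤ ENNReal.ofReal |(fderiv ℝ (f^[n]) x).det|}
              * ENNReal.ofReal (Real.exp ((n : ℝ) * ε)) := by
              exact mul_le_mul_left (measure_mono hsub) _
          _ ≤ 1 := by rw [mul_comm]; exact hmarkov
      refine h1.trans (le_of_eq ?_)
      rw [one_div, ← ENNReal.ofReal_inv_of_pos (Real.exp_pos _), ← Real.exp_neg]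
      have : -((n : ℝ) * ε) = (n : ℝ) * (-ε) := by ring
      rw [this, Real.exp_nat_mul, ENNReal.ofReal_pow (Real.exp_nonneg _)]
    have hrlt : r < 1 := by
      rw [hr', ENNReal.ofReal_lt_one]
      exact Real.exp_lt_one_iff.mpr (neg_lt_zero.mpr hε)
    have htsum : (∑' n, (volume.restrict K) (S n)) ≠ ⊤ := by
      have : (∑' n, (volume.restrict K) (S n)) ≤ ∑' n : ℕ, r ^ n :=
        ENNReal.tsum_le_tsum hbound
      rw [ENNReal.tsum_geometric] at this
      exact ne_top_of_le_ne_top (ENNReal.inv_ne_top.mpr (tsub_pos_of_lt hrlt).ne') this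
    filter_upwards [ae_eventually_notMem htsum] with x hx
    filter_upwards [hx, eventually_ge_atTop 1] with n hn hn1
    simp only [hS, Set.mem_setOf_eq, not_le] at hn
    have hn0 : (0 : ℝ) < n := by exact_mod_cast hn1
    rw [birkhoffAvg, div_le_iff₀ hn0]
    nlinarith [hn]
  -- conclusion
  filter_upwards [main] with x hx
  rintro μ hμprob hμK ⟨φ, hφ, hconv⟩
  have hlim := hconv h hcont
  by_contra hpos
  push_neg at hpos
  obtain ⟨m, hm⟩ := exists_nat_one_div_lt hpos
  have hev : ∀ᶠ i in atTop, birkhoffAvg f h x (φ i) ≤ 1 / ((m : ℝ) + 1) :=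
    (hφ.tendsto_atTop).eventually (hx m)
  have := le_of_tendsto hlim hev
  rw [hh] at this
  linarith
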